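/- For positive integers n and k with k ≤ n-1, the shifted truncated binomial expansion satisfies P_{n,k}(x-1) = ∑_{j=0}^{k} (-1)^{k-j} C(n, j) C(n-j-1, k-j) x^j. -/

import Mathlib

open Finset in
lemma key_sum (n m : ℕ) (hn : 1 ≤ n) :
    ∀ k, m ≤ k → k ≤ n - 1 →
    (∑ i ∈ Finset.range (k + 1), (-1 : ℚ) ^ (m + i) * (n.choose i) * (i.choose m)) =
      (-1 : ℚ) ^ (k - m) * (n.choose m) * ((n - m - 1).choose (k - m)) := by
  intro k
  induction k with
  | zero =>
    intro hm _
    interval_cases m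
    simp
  | succ k ih =>
    intro hm hk
    rcases Nat.lt_or_ge m (k + 1) with h | h
    · -- m ≤ k
      have hmk : m ≤ k := Nat.lt_succ_iff.mp h
      have hk' : k ≤ n - 1 := by omega
      rw [Finset.sum_range_succ, ih hmk hk']
      have hcm : (k + 1 ≤ n) := by omega
      have hcast : ((n.choose (k+1) : ℚ)) * ((k+1).choose m) =
          (n.choose m : ℚ) * ((n - m).choose (k + 1 - m)) := by
        rw [← Nat.cast_mul, ← Nat.cast_mul, Nat.choose_mul (by omega)]
      have hpascal : ((n - m).choose (k + 1 - m) : ℚ) =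
          ((n - m - 1).choose (k - m) : ℚ) + ((n - m - 1).choose (k + 1 - m) : ℚ) := by
        have h1 : n - m = (n - m - 1) + 1 := by omega
        have h2 : k + 1 - m = (k - m) + 1 := by omega
        rw [h1, h2, Nat.choose_succ_succ]
        push_cast
        ring
      have hsign : ((-1 : ℚ)) ^ (m + (k + 1)) = (-1) ^ (k + 1 - m) := by
        rw [show m + (k + 1) = (k + 1 - m) + 2 * m by omega, pow_add, pow_mul]
        simp
      have hsign2 : ((-1 : ℚ)) ^ (k - m) = - (-1) ^ (k + 1 - m) := by
        rw [show k + 1 - m = (k - m) + 1 by omega, pow_succ]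
        ring
      rw [hsign, hsign2]
      linear_combination ((-1 : ℚ) ^ (k + 1 - m)) * hcast +
        ((-1 : ℚ) ^ (k + 1 - m)) * (n.choose m : ℚ) * hpascal
    · -- m = k + 1
      have hm' : m = k + 1 := by omega
      subst hm'
      rw [Finset.sum_range_succ]
      have hz : ∀ i ∈ Finset.range (k + 1),
          (-1 : ℚ) ^ (k + 1 + i) * (n.choose i) * (i.choose (k+1)) = 0 := by
        intro i hi
        rw [Finset.mem_range] at hi
        have h0 : i.choose (k+1) = 0 := Nat.choose_eq_zero_of_lt (by omega)
        rw [h0]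
        simp
      rw [Finset.sum_eq_zero hz, zero_add, Nat.sub_self]
      have hone : ((-1 : ℚ)) ^ (k + 1 + (k + 1)) = 1 := by
        rw [show k + 1 + (k + 1) = 2 * (k + 1) by ring, pow_mul]
        simp
      simp [hone]

open Polynomial in
lemma coeff_X_sub_one_pow' (i m : ℕ) :
    ((X - 1 : ℚ[X]) ^ i).coeff m = (-1 : ℚ) ^ (m + i) * (i.choose m) := by
  rw [sub_pow, Polynomial.finset_sum_coeff]
  have hterm : ∀ j, ((-1 : ℚ[X]) ^ (j + i) * X ^ j * 1 ^ (i - j) * (i.choose j : ℚ[X])).coeff m =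
      if m = j then (-1 : ℚ) ^ (m + i) * (i.choose m) else 0 := by
    intro j
    have h2 : ((-1 : ℚ[X]) ^ (j + i) * X ^ j * 1 ^ (i - j) * (i.choose j : ℚ[X])) =
        C ((-1 : ℚ) ^ (j + i) * (i.choose j)) * X ^ j := by
      rw [map_mul, map_pow, map_neg, map_one, Polynomial.C_eq_natCast]
      ring
    rw [h2, Polynomial.coeff_C_mul, Polynomial.coeff_X_pow]
    by_cases hj : m = j
    · subst hj; simp
    · simp [hj]
  rw [Finset.sum_congr rfl fun j _ => hterm j, Finset.sum_ite_eq (Finset.range (i + 1))]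
  by_cases hm : m ∈ Finset.range (i + 1)
  · simp [hm]
  · rw [Finset.mem_range] at hm
    rw [Nat.choose_eq_zero_of_lt (by omega)]
    simp [Finset.mem_range, hm]

open Polynomial in
theorem truncated_binomial_shift (n k : ℕ) (hn : 1 ≤ n) (hk : 1 ≤ k) (hkn : k ≤ n - 1) :
    (∑ j ∈ Finset.range (k + 1), C ((n.choose j : ℚ)) * X ^ j).comp (X - 1) =
      ∑ j ∈ Finset.range (k + 1),
        C ((-1 : ℚ) ^ (k - j) * (n.choose j : ℚ) * ((n - j - 1).choose (k - j) : ℚ)) * X ^ j := by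
  ext m
  simp only [Polynomial.sum_comp, Polynomial.mul_comp, Polynomial.C_comp, Polynomial.pow_comp,
    Polynomial.X_comp, Polynomial.finset_sum_coeff, Polynomial.coeff_C_mul,
    Polynomial.coeff_X_pow, coeff_X_sub_one_pow', mul_ite, mul_one, mul_zero]
  rw [Finset.sum_ite_eq (Finset.range (k + 1))]
  rcases le_or_gt m k with hm | hm
  · rw [if_pos (by simp; omega)]
    rw [← key_sum n m hn k hm hkn]
    exact Finset.sum_congr rfl fun j _ => by ring
  · rw [if_neg (by simp; omega), Finset.sum_eq_zero]
    intro j hj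
    rw [Finset.mem_range] at hj
    have h0 : j.choose m = 0 := Nat.choose_eq_zero_of_lt (by omega)
    rw [h0]
    simp
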